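/- Fix a real α > 1 and define u(λ) = α·log|tanh λ| − Re(1/sinh(2λ)) for λ ∈ ℂ with tanh λ ≠ 0 and sinh(2λ) ≠ 0 (u equals Re g where g(λ) = i·(α·p(λ) + cos(p(λ)))). Then there exist R > 0 and δ ∈ (0, π/4) such that: (a) u(λ) < 0 for every λ on the boundary of the rectangle { x + iy : |x| ≤ R, |y| ≤ π/4 − δ }, and (b) u(λ) > 0 for every λ on the boundary of the rectangle { x + iy : |x| ≤ R, π/4 + δ ≤ y ≤ 3π/4 − δ }. -/

import Mathlib

open Complex Real

lemma sinh_decomp (x y : ℝ) :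
    Complex.sinh (x + y*I) = (Real.sinh x * Real.cos y : ℝ) + (Real.cosh x * Real.sin y : ℝ) * I := by
  rw [Complex.sinh_add, Complex.sinh_mul_I, Complex.cosh_mul_I]; push_cast; ring

lemma cosh_decomp (x y : ℝ) :
    Complex.cosh (x + y*I) = (Real.cosh x * Real.cos y : ℝ) + (Real.sinh x * Real.sin y : ℝ) * I := by
  rw [Complex.cosh_add, Complex.sinh_mul_I, Complex.cosh_mul_I]; push_cast; ring

lemma normSq_sinh (x y : ℝ) :
    Complex.normSq (Complex.sinh (x + y*I)) = (Real.cosh (2*x) - Real.cos (2*y))/2 := by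
  rw [sinh_decomp, Complex.normSq_add_mul_I, Real.cosh_two_mul, Real.cos_two_mul]
  nlinarith [Real.cosh_sq x, Real.sin_sq_add_cos_sq y]

lemma normSq_cosh (x y : ℝ) :
    Complex.normSq (Complex.cosh (x + y*I)) = (Real.cosh (2*x) + Real.cos (2*y))/2 := by
  rw [cosh_decomp, Complex.normSq_add_mul_I, Real.cosh_two_mul, Real.cos_two_mul]
  nlinarith [Real.cosh_sq x, Real.sin_sq_add_cos_sq y]

lemma sinh_re' (x y : ℝ) : (Complex.sinh (x + y*I)).re = Real.sinh x * Real.cos y := by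
  rw [sinh_decomp]
  simp only [Complex.add_re, Complex.ofReal_re, Complex.mul_re, Complex.I_re, Complex.I_im,
    Complex.ofReal_im]
  ring

/-- The real part of the phase function `g(λ) = i(α p(λ) + cos(p(λ)))`:
`u(λ) = α log|tanh λ| - Re(1/sinh(2λ))`. -/
noncomputable def rePhase (α : ℝ) (l : ℂ) : ℝ :=
  α * Real.log (‖Complex.tanh l‖) - ((1 : ℂ) / Complex.sinh (2 * l)).re

lemma rePhase_eq (α : ℝ) (l : ℂ)
    (h1 : Real.cos (2*l.im) < Real.cosh (2*l.re))
    (h2 : -Real.cosh (2*l.re) < Real.cos (2*l.im)) :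
    rePhase α l =
      α/2 * Real.log ((Real.cosh (2*l.re) - Real.cos (2*l.im)) / (Real.cosh (2*l.re) + Real.cos (2*l.im)))
      - Real.sinh (2*l.re) * Real.cos (2*l.im) /
        ((Real.cosh (2*l.re) - Real.cos (2*l.im)) * (Real.cosh (2*l.re) + Real.cos (2*l.im))) := by
  set x := l.re; set y := l.im
  set s := Real.cosh (2*x) with hs
  set c := Real.cos (2*y) with hc
  have hl : l = (x:ℂ) + (y:ℂ)*I := (Complex.re_add_im l).symm
  have hA : Complex.normSq (Complex.sinh l) = (s - c)/2 := by rw [hl]; exact normSq_sinh x y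
  have hB : Complex.normSq (Complex.cosh l) = (s + c)/2 := by rw [hl]; exact normSq_cosh x y
  have hApos : 0 < (s - c)/2 := by linarith
  have hBpos : 0 < (s + c)/2 := by linarith
  have hsne : Complex.sinh l ≠ 0 := by
    intro h; rw [h, Complex.normSq_zero] at hA; linarith
  have hcne : Complex.cosh l ≠ 0 := by
    intro h; rw [h, Complex.normSq_zero] at hB; linarith
  have h2l : (2:ℂ)*l = ((2*x : ℝ):ℂ) + ((2*y:ℝ):ℂ)*I := by rw [hl]; push_cast; ring
  have hC : Complex.normSq (Complex.sinh (2*l)) = (s - c)*(s + c) := by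
    rw [h2l, normSq_sinh]
    have e1 : Real.cosh (2*(2*x)) = 2*s^2 - 1 := by
      rw [Real.cosh_two_mul]; nlinarith [Real.cosh_sq (2*x)]
    have e2 : Real.cos (2*(2*y)) = 2*c^2 - 1 := Real.cos_two_mul (2*y)
    rw [e1, e2]; ring
  have hre : (Complex.sinh (2*l)).re = Real.sinh (2*x) * c := by rw [h2l, sinh_re']
  have habs : Real.log (‖Complex.tanh l‖) =
      (1/2) * Real.log ((s - c)/(s + c)) := by
    have hq : (s-c)/(s+c) = ((s-c)/2)/((s+c)/2) := by
      rw [div_div_div_comm]; norm_num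
    rw [Complex.tanh_eq_sinh_div_cosh, norm_div,
      Real.log_div (norm_ne_zero_iff.mpr hsne) (norm_ne_zero_iff.mpr hcne),
      Complex.norm_def, Complex.norm_def,
      Real.log_sqrt (Complex.normSq_nonneg _), Real.log_sqrt (Complex.normSq_nonneg _),
      hA, hB, hq, Real.log_div (ne_of_gt hApos) (ne_of_gt hBpos)]
    ring
  have hinv : ((1 : ℂ) / Complex.sinh (2 * l)).re
      = Real.sinh (2*x) * c / ((s - c)*(s + c)) := by
    rw [one_div, Complex.inv_re, hre, hC]
  rw [rePhase, habs, hinv]; ring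

/-- Core inequality. -/
lemma core (α s t c : ℝ) (hα : 1 < α) (hc : 0 < c) (hcs : c < s) (hs : 1 ≤ s)
    (hbd : 0 ≤ t ∨ -t < α*(s-c)) :
    α/2 * Real.log ((s-c)/(s+c)) - t*c/((s-c)*(s+c)) < 0 := by
  have hsc : 0 < s - c := by linarith
  have hspc : 0 < s + c := by linarith
  have hD : 0 < (s-c)*(s+c) := mul_pos hsc hspc
  have hLneg : Real.log ((s-c)/(s+c)) < 0 := by
    apply Real.log_neg (div_pos hsc hspc)
    rw [div_lt_one hspc]; linarith
  rcases hbd with ht | ht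
  · have h1 : α/2 * Real.log ((s-c)/(s+c)) < 0 := by
      apply mul_neg_of_pos_of_neg (by linarith) hLneg
    have h2 : 0 ≤ t*c/((s-c)*(s+c)) := by positivity
    linarith
  · have hL : Real.log ((s-c)/(s+c)) ≤ -2*c/(s+c) := by
      have := Real.log_le_sub_one_of_pos (div_pos hsc hspc)
      have he : (s-c)/(s+c) - 1 = -2*c/(s+c) := by field_simp; ring
      linarith [he ▸ this]
    have h1 : α/2 * Real.log ((s-c)/(s+c)) ≤ α/2 * (-2*c/(s+c)) := by
      apply mul_le_mul_of_nonneg_left hL (by linarith)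
    have h2 : -t*c/((s-c)*(s+c)) < α*c/(s+c) := by
      rw [div_lt_iff₀ hD]
      have : α*c/(s+c) * ((s-c)*(s+c)) = (α*(s-c))*c := by field_simp
      rw [this]
      apply mul_lt_mul_of_pos_right ht hc
    have he2 : α/2 * (-2*c/(s+c)) = -(α*c/(s+c)) := by ring
    have : t*c/((s-c)*(s+c)) = -(-t*c/((s-c)*(s+c))) := by ring
    rw [this]
    linarith [h1, h2, he2 ▸ h1]

/-- bound when c is small -/
lemma bd_small (α s t c : ℝ) (hα : 1 < α) (hc : 0 < c) (hc' : c*(α+1) ≤ α-1)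
    (hs : 1 ≤ s) (ht : t^2 = s^2 - 1) (htn : t < 0) : -t < α*(s-c) := by
  have hc1 : c < 1 := by nlinarith
  have hsc : 0 < s - c := by linarith
  have key : s + c < α^2*(s-c) := by
    nlinarith [mul_le_mul_of_nonneg_right hc' (show (0:ℝ) ≤ α+1 by linarith),
      mul_pos hc (show (0:ℝ) < α by linarith),
      mul_le_mul_of_nonneg_left hs (show (0:ℝ) ≤ α^2 - 1 by nlinarith)]
  have h2 : (-t)^2 < (α*(s-c))^2 := by
    nlinarith [mul_lt_mul_of_pos_left key hsc, ht, sq_nonneg c, hc1, hc]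
  exact lt_of_pow_lt_pow_left₀ 2 (by nlinarith) h2

/-- bound at the side edge -/
lemma bd_side (α R c : ℝ) (hα : 1 < α) (hc : c ≤ 1)
    (hR : (α+1)/(α-1) < Real.exp (2*R)) :
    Real.sinh (2*R) < α*(Real.cosh (2*R) - c) := by
  have ha1 : (0:ℝ) < α - 1 := by linarith
  set E := Real.exp (2*R) with hE
  have hE1 : 1 < E := by
    have h0 : (1:ℝ) < (α+1)/(α-1) := by
      rw [lt_div_iff₀ ha1]; linarith
    linarith
  have hEpos : (0:ℝ) < E := lt_trans one_pos hE1
  have hEK : α + 1 < E*(α-1) := by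
    have := (div_lt_iff₀ ha1).mp hR; linarith
  have hinv : E * E⁻¹ = 1 := mul_inv_cancel₀ (ne_of_gt hEpos)
  have hsinh : Real.sinh (2*R) = (E - E⁻¹)/2 := by
    rw [Real.sinh_eq, hE, ← Real.exp_neg]
  have hcosh : Real.cosh (2*R) = (E + E⁻¹)/2 := by
    rw [Real.cosh_eq, hE, ← Real.exp_neg]
  have key : E - E⁻¹ < α*(E+E⁻¹-2) := by
    have hp : (0:ℝ) < (E-1)*(E*(α-1)-(α+1)) := mul_pos (by linarith) (by linarith)
    have h4 : (E - E⁻¹) * E = E^2 - 1 := by linear_combination -hinv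
    have h5 : (α*(E+E⁻¹-2))*E = α*(E^2+1-2*E) := by linear_combination α*hinv
    have h6 : (E - E⁻¹)*E < (α*(E+E⁻¹-2))*E := by rw [h4, h5]; nlinarith [hp]
    exact lt_of_mul_lt_mul_right h6 (le_of_lt hEpos)
  have h3 : 0 ≤ α*(1-c) := mul_nonneg (by linarith) (by linarith)
  rw [hsinh, hcosh]
  nlinarith [key, h3]

/-- For `α > 1` there exist `R > 0` and `δ ∈ (0, π/4)` such that `u = Re g` is
strictly negative on the boundary of the rectangle `{x + iy : |x| ≤ R, |y| ≤ π/4 - δ}`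
(the deformed hole contour) and strictly positive on the boundary of the rectangle
`{x + iy : |x| ≤ R, π/4 + δ ≤ y ≤ 3π/4 - δ}` (the deformed particle contour). -/
theorem rePhase_signs_on_deformed_contours (α : ℝ) (hα : 1 < α) :
    ∃ R > (0 : ℝ), ∃ δ : ℝ, 0 < δ ∧ δ < π / 4 ∧
      (∀ l : ℂ, |l.re| ≤ R → |l.im| ≤ π / 4 - δ →
        (|l.re| = R ∨ |l.im| = π / 4 - δ) → rePhase α l < 0) ∧
      (∀ l : ℂ, |l.re| ≤ R → π / 4 + δ ≤ l.im → l.im ≤ 3 * π / 4 - δ →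
        (|l.re| = R ∨ l.im = π / 4 + δ ∨ l.im = 3 * π / 4 - δ) → 0 < rePhase α l) := by
  have ha1 : (0:ℝ) < α - 1 := by linarith
  have ha2 : (0:ℝ) < α + 1 := by linarith
  set K : ℝ := (α+1)/(α-1) with hK
  have hK1 : 1 < K := by rw [hK, lt_div_iff₀ ha1]; linarith
  set R := Real.log (K+1) with hRdef
  set δ := min ((α-1)/(α+1)/2) (π/8) with hδdef
  have hπ : (0:ℝ) < π := Real.pi_pos
  have hδpos : 0 < δ := lt_min (by positivity) (by positivity)
  have hδle : δ ≤ (α-1)/(α+1)/2 := min_le_left _ _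
  have hδle2 : δ ≤ π/8 := min_le_right _ _
  have hδlt : δ < π/4 := by linarith
  have hsin_le : Real.sin (2*δ) * (α+1) ≤ α - 1 := by
    have h1 : Real.sin (2*δ) ≤ 2*δ := Real.sin_le (by linarith)
    have h2 : 2*δ ≤ (α-1)/(α+1) := by linarith
    have h3 : Real.sin (2*δ) ≤ (α-1)/(α+1) := le_trans h1 h2
    calc Real.sin (2*δ) * (α+1) ≤ (α-1)/(α+1) * (α+1) := by nlinarith
      _ = α - 1 := by field_simp
  have hsinpos : 0 < Real.sin (2*δ) := Real.sin_pos_of_pos_of_lt_pi (by linarith) (by linarith)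
  have hsinlt1 : Real.sin (2*δ) < 1 := by nlinarith
  have hR0 : 0 < R := Real.log_pos (by linarith)
  have hRexp : (α+1)/(α-1) < Real.exp (2*R) := by
    have he : Real.exp R = K + 1 := Real.exp_log (by linarith)
    have h2 : Real.exp (2*R) = (K+1)^2 := by rw [two_mul, Real.exp_add, he]; ring
    rw [← hK, h2]; nlinarith
  refine ⟨R, hR0, δ, hδpos, hδlt, ?_, ?_⟩
  · -- hole contour rectangle
    intro l hx hy hedge
    set x := l.re with hxdef
    set y := l.im with hydef
    set s := Real.cosh (2*x) with hsdef
    set c := Real.cos (2*y) with hcdef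
    set t := Real.sinh (2*x) with htdef
    have hs1 : 1 ≤ s := Real.one_le_cosh _
    have hyabs := abs_le.mp hy
    have hc0 : 0 < c := Real.cos_pos_of_mem_Ioo ⟨by linarith [hyabs.1], by linarith [hyabs.2]⟩
    have hc1 : c ≤ 1 := Real.cos_le_one _
    have hsinh_neg : x < 0 → t < 0 := by
      intro h
      have : Real.sinh (2*x) < Real.sinh 0 := Real.sinh_lt_sinh.2 (by linarith)
      rw [Real.sinh_zero] at this; exact this
    have hsinh_sq : t^2 = s^2 - 1 := by
      rw [htdef, hsdef]; have := Real.cosh_sq (2*x); linarith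
    have hkey : c < s ∧ (0 ≤ t ∨ -t < α*(s-c)) := by
      rcases hedge with hex | hey
      · have hsR : s = Real.cosh (2*R) := by
          rw [hsdef, ← Real.cosh_abs, abs_mul, hex]
          norm_num
        have hcs : c < s := by
          rw [hsR]
          exact lt_of_le_of_lt hc1 (Real.one_lt_cosh.2 (by positivity))
        refine ⟨hcs, ?_⟩
        rcases le_or_gt 0 x with hx0 | hx0
        · left
          have : Real.sinh 0 ≤ Real.sinh (2*x) := by
            rcases eq_or_lt_of_le hx0 with h | h
            · rw [← h]; norm_num
            · exact le_of_lt (Real.sinh_lt_sinh.2 (by linarith))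
          rw [Real.sinh_zero] at this; exact this
        · right
          have hxR : x = -R := by
            rcases (abs_eq (le_of_lt hR0)).mp hex with h | h
            · exfalso; linarith
            · exact h
          have ht' : -t = Real.sinh (2*R) := by
            rw [htdef, hxR, show (2:ℝ)*(-R) = -(2*R) by ring, Real.sinh_neg, neg_neg]
          rw [ht', hsR]
          exact bd_side α R c hα hc1 hRexp
      · have hcval : c = Real.sin (2*δ) := by
          rw [hcdef, ← Real.cos_abs, abs_mul, hey]
          norm_num
          rw [show (2:ℝ)*(π/4 - δ) = π/2 - 2*δ by ring, Real.cos_pi_div_two_sub]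
        have hcs : c < s := by rw [hcval]; linarith
        refine ⟨hcs, ?_⟩
        rcases le_or_gt 0 x with hx0 | hx0
        · left
          have : Real.sinh 0 ≤ Real.sinh (2*x) := by
            rcases eq_or_lt_of_le hx0 with h | h
            · rw [← h]; norm_num
            · exact le_of_lt (Real.sinh_lt_sinh.2 (by linarith))
          rw [Real.sinh_zero] at this; exact this
        · right
          exact bd_small α s t c hα hc0 (by rw [hcval]; exact hsin_le) hs1 hsinh_sq
            (hsinh_neg hx0)
    obtain ⟨hcs, hbd⟩ := hkey
    have hre := rePhase_eq α l hcs (by linarith)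
    rw [hre]
    exact core α s t c hα hc0 hcs hs1 hbd
  · -- particle contour rectangle
    intro l hx hy1 hy2 hedge
    set x := l.re with hxdef
    set y := l.im with hydef
    set s := Real.cosh (2*x) with hsdef
    set t := Real.sinh (2*x) with htdef
    set c' : ℝ := -Real.cos (2*y) with hcdef
    have hs1 : 1 ≤ s := Real.one_le_cosh _
    have hc0 : 0 < c' := by
      rw [hcdef, neg_pos]
      exact Real.cos_neg_of_pi_div_two_lt_of_lt (by linarith) (by linarith)
    have hc1 : c' ≤ 1 := by
      rw [hcdef]; linarith [Real.neg_one_le_cos (2*y)]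
    have hsinh_neg : x < 0 → t < 0 := by
      intro h
      have : Real.sinh (2*x) < Real.sinh 0 := Real.sinh_lt_sinh.2 (by linarith)
      rw [Real.sinh_zero] at this; exact this
    have hsinh_sq : t^2 = s^2 - 1 := by
      rw [htdef, hsdef]; have := Real.cosh_sq (2*x); linarith
    have hsinh_pos : 0 ≤ x → 0 ≤ t := by
      intro hx0
      have : Real.sinh 0 ≤ Real.sinh (2*x) := by
        rcases eq_or_lt_of_le hx0 with h | h
        · rw [← h]; norm_num
        · exact le_of_lt (Real.sinh_lt_sinh.2 (by linarith))
      rw [Real.sinh_zero] at this; exact this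
    have hkey : c' < s ∧ (0 ≤ t ∨ -t < α*(s-c')) := by
      rcases hedge with hex | hey | hey
      · have hsR : s = Real.cosh (2*R) := by
          rw [hsdef, ← Real.cosh_abs, abs_mul, hex]
          norm_num
        have hcs : c' < s := by
          rw [hsR]
          exact lt_of_le_of_lt hc1 (Real.one_lt_cosh.2 (by positivity))
        refine ⟨hcs, ?_⟩
        rcases le_or_gt 0 x with hx0 | hx0
        · exact Or.inl (hsinh_pos hx0)
        · right
          have hxR : x = -R := by
            rcases (abs_eq (le_of_lt hR0)).mp hex with h | h
            · exfalso; linarith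
            · exact h
          have ht' : -t = Real.sinh (2*R) := by
            rw [htdef, hxR, show (2:ℝ)*(-R) = -(2*R) by ring, Real.sinh_neg, neg_neg]
          rw [ht', hsR]
          exact bd_side α R c' hα hc1 hRexp
      · have hcval : c' = Real.sin (2*δ) := by
          rw [hcdef, hey, show (2:ℝ)*(π/4 + δ) = π/2 + 2*δ by ring, Real.cos_add]
          simp [Real.cos_pi_div_two, Real.sin_pi_div_two]
        have hcs : c' < s := by rw [hcval]; linarith
        refine ⟨hcs, ?_⟩
        rcases le_or_gt 0 x with hx0 | hx0
        · exact Or.inl (hsinh_pos hx0)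
        · exact Or.inr (bd_small α s t c' hα hc0 (by rw [hcval]; exact hsin_le) hs1 hsinh_sq
            (hsinh_neg hx0))
      · have hcval : c' = Real.sin (2*δ) := by
          rw [hcdef, hey, show (2:ℝ)*(3*π/4 - δ) = π + (π/2 - 2*δ) by ring, Real.cos_add,
            Real.cos_pi_div_two_sub]
          simp [Real.cos_pi, Real.sin_pi]
        have hcs : c' < s := by rw [hcval]; linarith
        refine ⟨hcs, ?_⟩
        rcases le_or_gt 0 x with hx0 | hx0
        · exact Or.inl (hsinh_pos hx0)
        · exact Or.inr (bd_small α s t c' hα hc0 (by rw [hcval]; exact hsin_le) hs1 hsinh_sq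
            (hsinh_neg hx0))
    obtain ⟨hcs, hbd⟩ := hkey
    have hcc : Real.cos (2*y) = -c' := by rw [hcdef]; ring
    have hre := rePhase_eq α l (by rw [hcc]; linarith) (by rw [hcc]; linarith)
    rw [hre, hcc]
    have hlog : Real.log ((s - -c')/(s + -c')) = -Real.log ((s - c')/(s + c')) := by
      rw [show (s - -c')/(s + -c') = ((s - c')/(s + c'))⁻¹ by rw [inv_div]; ring_nf,
        Real.log_inv]
    rw [hlog]
    have := core α s t c' hα hc0 hcs hs1 hbd
    have heq : α/2 * -Real.log ((s - c')/(s + c')) - t * -c' / ((s - -c')*(s + -c'))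
        = -(α/2 * Real.log ((s - c')/(s + c')) - t*c'/((s - c')*(s + c'))) := by
      ring_nf
    rw [heq]
    linarith
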